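/- Let P be a strictly positive joint distribution over finite-valued random variables X = (X1, X2), and suppose the partitioned ratio P(X1, X2) / (P(X1)·P(X2)) can be written as (1/Z) · ∏_{B ∈ 𝐁(G)} φ_B(X_B), where 𝐁(G) is the set of passages of a graph G relative to the partition (X1, X2), Z > 0 is a constant, and each factor φ_B is a strictly positive function of the variables X_B only. Then P is a Partitioned Markov Network with respect to G; in particular, for every X_i ∈ X1, P(X_i | X1 ∪ X_{N(i)} \ X_i) = P(X_i | all other variables). -/
import Mathlib


open Finset
open scoped Classical

variable {ι V : Type*}

/-- The marginal probability `P(X_A = x_A)`. -/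
noncomputable def margin [Fintype ι] [Fintype V] [DecidableEq ι] [DecidableEq V]
    (P : (ι → V) → ℝ) (A : Finset ι) (x : ι → V) : ℝ :=
  ∑ y ∈ Finset.univ.filter (fun y : ι → V => ∀ i ∈ A, y i = x i), P y

/-- `P` is a partitioned Markov network w.r.t. `G` for the partition `(X1, X1ᶜ)`. -/
noncomputable def IsPMN [Fintype ι] [Fintype V] [DecidableEq ι] [DecidableEq V]
    (P : (ι → V) → ℝ) (G : SimpleGraph ι) [DecidableRel G.Adj] (X1 : Finset ι) : Prop :=
  (∀ i ∈ X1, ∀ x : ι → V,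
      margin P (insert i ((X1 ∪ G.neighborFinset i).erase i)) x
          / margin P ((X1 ∪ G.neighborFinset i).erase i) x
        = P x / margin P (Finset.univ.erase i) x) ∧
  (∀ i ∈ X1ᶜ, ∀ x : ι → V,
      margin P (insert i ((X1ᶜ ∪ G.neighborFinset i).erase i)) x
          / margin P ((X1ᶜ ∪ G.neighborFinset i).erase i) x
        = P x / margin P (Finset.univ.erase i) x)

/-- `B` is a passage of `G` relative to the partition `(X1, X1ᶜ)`. -/
def IsPassage [Fintype ι] [DecidableEq ι] (G : SimpleGraph ι) (X1 : Finset ι) (B : G.Subgraph) : Prop :=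
  (B.verts ∩ ↑X1).Nonempty ∧ (B.verts ∩ ↑(X1ᶜ)).Nonempty ∧
    ∀ u ∈ B.verts ∩ ↑X1, ∀ v ∈ B.verts ∩ ↑(X1ᶜ), B.Adj u v

noncomputable instance subgraphFintype [Finite ι] (G : SimpleGraph ι) :
    Fintype G.Subgraph := by
  have : Finite G.Subgraph :=
    Finite.of_injective (fun B => (B.verts, B.Adj)) (by
      intro a b h
      simp only [Prod.mk.injEq] at h
      exact SimpleGraph.Subgraph.ext h.1 h.2)
  exact Fintype.ofFinite _

lemma margin_pos [Fintype ι] [Fintype V] [DecidableEq ι] [DecidableEq V]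
    (P : (ι → V) → ℝ) (hpos : ∀ x, 0 < P x) (A : Finset ι) (x : ι → V) :
    0 < margin P A x := by
  apply Finset.sum_pos (fun y _ => hpos y)
  exact ⟨x, by simp⟩

lemma margin_congr [Fintype ι] [Fintype V] [DecidableEq ι] [DecidableEq V]
    (P : (ι → V) → ℝ) (A : Finset ι) (x y : ι → V) (h : ∀ j ∈ A, x j = y j) :
    margin P A x = margin P A y := by
  unfold margin
  congr 1
  ext z
  simp only [mem_filter, mem_univ, true_and]
  constructor
  · intro hz j hj; rw [hz j hj, h j hj]
  · intro hz j hj; rw [hz j hj, h j hj]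

lemma key [Fintype ι] [Fintype V] [DecidableEq ι] [DecidableEq V]
    (P f g : (ι → V) → ℝ) (hP : ∀ x, P x = f x * g x)
    (hfpos : ∀ x, 0 < f x) (hgpos : ∀ x, 0 < g x)
    (A : Finset ι) (i : ι) (hiA : i ∈ A)
    (hf : ∀ x y : ι → V, (∀ j ∈ A, x j = y j) → f x = f y)
    (hg : ∀ x y : ι → V, (∀ j, j ≠ i → x j = y j) → g x = g y)
    (x : ι → V) :
    margin P (insert i (A.erase i)) x / margin P (A.erase i) x
      = P x / margin P (Finset.univ.erase i) x := by
  have hA : insert i (A.erase i) = A := Finset.insert_erase hiA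
  rw [hA]
  set Gx : ℝ := ∑ y ∈ Finset.univ.filter (fun y : ι → V => ∀ j ∈ A, y j = x j), g y with hGx
  set Fs : ℝ := ∑ v : V, f (Function.update x i v) with hFs
  have hV : Nonempty V := ⟨x i⟩
  -- Claim 1 : margin P A x = f x * Gx
  have c1 : margin P A x = f x * Gx := by
    rw [hGx, Finset.mul_sum]
    unfold margin
    apply Finset.sum_congr rfl
    intro y hy
    simp only [mem_filter, mem_univ, true_and] at hy
    rw [hP y, hf y x (fun j hj => hy j hj)]
  -- Claim 2 : margin P (A.erase i) x = Fs * Gx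
  have c2 : margin P (A.erase i) x = Fs * Gx := by
    have hsplit : Finset.univ.filter (fun y : ι → V => ∀ j ∈ A.erase i, y j = x j)
        = (Finset.univ : Finset V).biUnion
            (fun v => Finset.univ.filter
              (fun y : ι → V => ∀ j ∈ A, y j = Function.update x i v j)) := by
      ext y
      simp only [mem_filter, mem_univ, true_and, mem_biUnion]
      constructor
      · intro hy
        refine ⟨y i, fun j hj => ?_⟩
        by_cases hji : j = i
        · subst hji; simp [Function.update]
        · rw [Function.update_of_ne hji]
          exact hy j (Finset.mem_erase.2 ⟨hji, hj⟩)
      · rintro ⟨v, hv⟩ j hj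
        rw [Finset.mem_erase] at hj
        rw [hv j hj.2, Function.update_of_ne hj.1]
    have hdisj : ∀ v ∈ (Finset.univ : Finset V), ∀ w ∈ (Finset.univ : Finset V), v ≠ w →
        Disjoint (Finset.univ.filter
              (fun y : ι → V => ∀ j ∈ A, y j = Function.update x i v j))
          (Finset.univ.filter
              (fun y : ι → V => ∀ j ∈ A, y j = Function.update x i w j)) := by
      intro v _ w _ hvw
      rw [Finset.disjoint_left]
      intro y hy hy'
      simp only [mem_filter, mem_univ, true_and] at hy hy'
      exact hvw ((by simpa [Function.update] using (hy i hiA).symm.trans (hy' i hiA) : v = w))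
    unfold margin
    rw [hsplit, Finset.sum_biUnion hdisj, hFs, Finset.sum_mul]
    apply Finset.sum_congr rfl
    intro v _
    -- each inner sum equals f (update x i v) * Gx
    have hfy : ∀ y ∈ Finset.univ.filter
        (fun y : ι → V => ∀ j ∈ A, y j = Function.update x i v j),
        P y = f (Function.update x i v) * g y := by
      intro y hy
      simp only [mem_filter, mem_univ, true_and] at hy
      rw [hP y, hf y (Function.update x i v) (fun j hj => hy j hj)]
    rw [Finset.sum_congr rfl hfy, ← Finset.mul_sum]
    congr 1
    -- ∑ g over set = Gx via bijection update · i (x i)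
    rw [hGx]
    apply Finset.sum_nbij' (fun y => Function.update y i (x i))
      (fun y => Function.update y i v)
    · intro y hy
      simp only [mem_filter, mem_univ, true_and] at hy ⊢
      intro j hj
      by_cases hji : j = i
      · subst hji; simp [Function.update]
      · rw [Function.update_of_ne hji, hy j hj, Function.update_of_ne hji]
    · intro y hy
      simp only [mem_filter, mem_univ, true_and] at hy ⊢
      intro j hj
      by_cases hji : j = i
      · subst hji; simp [Function.update]
      · rw [Function.update_of_ne hji, Function.update_of_ne hji, hy j hj]
    · intro y hy
      simp only [mem_filter, mem_univ, true_and] at hy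
      have hyi : y i = v := by simpa [Function.update] using hy i hiA
      rw [Function.update_idem, ← hyi, Function.update_eq_self]
    · intro y hy
      simp only [mem_filter, mem_univ, true_and] at hy
      have hyi : y i = x i := hy i hiA
      rw [Function.update_idem, ← hyi, Function.update_eq_self]
    · intro y hy
      exact hg _ _ (fun j hj => (Function.update_of_ne hj _ _).symm)
  -- Claim 3 : margin P (univ.erase i) x = Fs * g x
  have c3 : margin P (Finset.univ.erase i) x = Fs * g x := by
    have hset : Finset.univ.filter (fun y : ι → V => ∀ j ∈ Finset.univ.erase i, y j = x j)
        = (Finset.univ : Finset V).image (fun v => Function.update x i v) := by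
      ext y
      simp only [mem_filter, mem_univ, true_and, mem_image]
      constructor
      · intro hy
        refine ⟨y i, ?_⟩
        funext j
        by_cases hji : j = i
        · subst hji; simp [Function.update]
        · rw [Function.update_of_ne hji]
          exact (hy j (Finset.mem_erase.2 ⟨hji, Finset.mem_univ j⟩)).symm
      · rintro ⟨v, rfl⟩ j hj
        rw [Finset.mem_erase] at hj
        exact Function.update_of_ne hj.1 _ _
    unfold margin
    rw [hset, Finset.sum_image (by
      intro a _ b _ hab
      have := congrFun hab i
      simpa [Function.update] using this)]
    rw [hFs, Finset.sum_mul]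
    apply Finset.sum_congr rfl
    intro v _
    rw [hP]
    congr 1
    exact hg _ _ (fun j hj => Function.update_of_ne hj _ _)
  have hGxpos : 0 < Gx := by
    apply Finset.sum_pos (fun y _ => hgpos y)
    exact ⟨x, by simp⟩
  have hFspos : 0 < Fs := Finset.sum_pos (fun v _ => hfpos _) Finset.univ_nonempty
  rw [c1, c2, c3, hP x]
  rw [mul_comm (f x) Gx, mul_comm Fs Gx, mul_div_mul_left _ _ (ne_of_gt hGxpos),
    mul_comm (f x) (g x), mul_comm Fs (g x), mul_div_mul_left _ _ (ne_of_gt (hgpos x))]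

/-- If the partitioned ratio `P(X1,X2)/(P(X1)P(X2))` of a strictly positive joint
distribution factorizes as `(1/Z) ∏_{B ∈ 𝐁(G)} φ_B(X_B)` over the set of passages
of `G`, then `P` is a partitioned Markov network with respect to `G`. -/
theorem gpr_is_pmn [Fintype ι] [DecidableEq ι] [Fintype V] [DecidableEq V]
    (P : (ι → V) → ℝ) (hpos : ∀ x, 0 < P x) (hsum : ∑ x : ι → V, P x = 1)
    (G : SimpleGraph ι) [DecidableRel G.Adj] (X1 : Finset ι)
    (h1 : X1.Nonempty) (h2 : X1ᶜ.Nonempty)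
    (Z : ℝ) (hZ : 0 < Z)
    (φ : G.Subgraph → (ι → V) → ℝ)
    (hφpos : ∀ B : G.Subgraph, IsPassage G X1 B → ∀ x, 0 < φ B x)
    (hφdep : ∀ B : G.Subgraph, IsPassage G X1 B →
      ∀ x y : ι → V, (∀ i ∈ B.verts, x i = y i) → φ B x = φ B y)
    (hfact : ∀ x : ι → V,
      P x / (margin P X1 x * margin P X1ᶜ x)
        = (1 / Z) * ∏ B ∈ Finset.univ.filter (IsPassage G X1), φ B x) :
    IsPMN P G X1 := by
  rw [IsPMN]
  have hPfull : ∀ y : ι → V, P y = margin P X1 y * margin P X1ᶜ y *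
      ((1 / Z) * ∏ B ∈ Finset.univ.filter (IsPassage G X1), φ B y) := by
    intro y
    have hm1 := margin_pos P hpos X1 y
    have hm2 := margin_pos P hpos X1ᶜ y
    have h := hfact y
    rw [div_eq_iff (by positivity)] at h
    rw [h]; ring
  constructor
  · intro i hi x
    set A : Finset ι := X1 ∪ G.neighborFinset i with hAdef
    have hiA : i ∈ A := Finset.mem_union_left _ hi
    set Pass : Finset G.Subgraph := Finset.univ.filter (IsPassage G X1) with hPass
    set f : (ι → V) → ℝ := fun y =>
      margin P X1 y * ((1 / Z) * ∏ B ∈ Pass.filter (fun B => i ∈ B.verts), φ B y) with hfdef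
    set g : (ι → V) → ℝ := fun y =>
      margin P X1ᶜ y * ∏ B ∈ Pass.filter (fun B => i ∉ B.verts), φ B y with hgdef
    have hmemPass : ∀ B ∈ Pass, IsPassage G X1 B := by
      intro B hB; exact (Finset.mem_filter.1 hB).2
    have hPfg : ∀ y, P y = f y * g y := by
      intro y
      rw [hPfull y, hfdef, hgdef]
      have hsplit := Finset.prod_filter_mul_prod_filter_not Pass
        (fun B => i ∈ B.verts) (fun B => φ B y)
      rw [← hsplit]
      ring
    have hfpos : ∀ y, 0 < f y := by
      intro y
      apply mul_pos (margin_pos P hpos X1 y)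
      apply mul_pos (by positivity)
      exact Finset.prod_pos (fun B hB => hφpos B (hmemPass B (Finset.mem_filter.1 hB).1) y)
    have hgpos : ∀ y, 0 < g y := by
      intro y
      apply mul_pos (margin_pos P hpos X1ᶜ y)
      exact Finset.prod_pos (fun B hB => hφpos B (hmemPass B (Finset.mem_filter.1 hB).1) y)
    have hf : ∀ x y : ι → V, (∀ j ∈ A, x j = y j) → f x = f y := by
      intro x y hxy
      rw [hfdef]
      simp only
      rw [margin_congr P X1 x y (fun j hj => hxy j (Finset.mem_union_left _ hj))]
      congr 2
      apply Finset.prod_congr rfl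
      intro B hB
      have hBf := Finset.mem_filter.1 hB
      have hBp := hmemPass B hBf.1
      have hiB : i ∈ B.verts := hBf.2
      apply hφdep B hBp
      intro j hj
      by_cases hjX : j ∈ X1
      · exact hxy j (Finset.mem_union_left _ hjX)
      · have hadj : B.Adj i j := hBp.2.2 i ⟨hiB, Finset.mem_coe.2 hi⟩ j
          ⟨hj, by simp [hjX]⟩
        have : j ∈ G.neighborFinset i := by
          rw [SimpleGraph.mem_neighborFinset]; exact hadj.adj_sub
        exact hxy j (Finset.mem_union_right _ this)
    have hg : ∀ x y : ι → V, (∀ j, j ≠ i → x j = y j) → g x = g y := by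
      intro x y hxy
      rw [hgdef]
      simp only
      rw [margin_congr P X1ᶜ x y (fun j hj => hxy j (by
        rintro rfl; exact (Finset.mem_compl.1 hj) hi))]
      congr 1
      apply Finset.prod_congr rfl
      intro B hB
      have hBf := Finset.mem_filter.1 hB
      apply hφdep B (hmemPass B hBf.1)
      intro j hj
      exact hxy j (by rintro rfl; exact hBf.2 hj)
    exact key P f g hPfg hfpos hgpos A i hiA hf hg x
  · intro i hi x
    set A : Finset ι := X1ᶜ ∪ G.neighborFinset i with hAdef
    have hiA : i ∈ A := Finset.mem_union_left _ hi
    set Pass : Finset G.Subgraph := Finset.univ.filter (IsPassage G X1) with hPass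
    set f : (ι → V) → ℝ := fun y =>
      margin P X1ᶜ y * ((1 / Z) * ∏ B ∈ Pass.filter (fun B => i ∈ B.verts), φ B y) with hfdef
    set g : (ι → V) → ℝ := fun y =>
      margin P X1 y * ∏ B ∈ Pass.filter (fun B => i ∉ B.verts), φ B y with hgdef
    have hmemPass : ∀ B ∈ Pass, IsPassage G X1 B := by
      intro B hB; exact (Finset.mem_filter.1 hB).2
    have hPfg : ∀ y, P y = f y * g y := by
      intro y
      rw [hPfull y, hfdef, hgdef]
      have hsplit := Finset.prod_filter_mul_prod_filter_not Pass
        (fun B => i ∈ B.verts) (fun B => φ B y)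
      rw [← hsplit]
      ring
    have hfpos : ∀ y, 0 < f y := by
      intro y
      apply mul_pos (margin_pos P hpos X1ᶜ y)
      apply mul_pos (by positivity)
      exact Finset.prod_pos (fun B hB => hφpos B (hmemPass B (Finset.mem_filter.1 hB).1) y)
    have hgpos : ∀ y, 0 < g y := by
      intro y
      apply mul_pos (margin_pos P hpos X1 y)
      exact Finset.prod_pos (fun B hB => hφpos B (hmemPass B (Finset.mem_filter.1 hB).1) y)
    have hf : ∀ x y : ι → V, (∀ j ∈ A, x j = y j) → f x = f y := by
      intro x y hxy
      rw [hfdef]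
      simp only
      rw [margin_congr P X1ᶜ x y (fun j hj => hxy j (Finset.mem_union_left _ hj))]
      congr 2
      apply Finset.prod_congr rfl
      intro B hB
      have hBf := Finset.mem_filter.1 hB
      have hBp := hmemPass B hBf.1
      have hiB : i ∈ B.verts := hBf.2
      apply hφdep B hBp
      intro j hj
      by_cases hjX : j ∈ X1ᶜ
      · exact hxy j (Finset.mem_union_left _ hjX)
      · have hjX1 : j ∈ X1 := by
          by_contra hc; exact hjX (Finset.mem_compl.2 hc)
        have hadj : B.Adj j i := hBp.2.2 j ⟨hj, Finset.mem_coe.2 hjX1⟩ i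
          ⟨hiB, Finset.mem_coe.2 hi⟩
        have : j ∈ G.neighborFinset i := by
          rw [SimpleGraph.mem_neighborFinset]; exact hadj.adj_sub.symm
        exact hxy j (Finset.mem_union_right _ this)
    have hg : ∀ x y : ι → V, (∀ j, j ≠ i → x j = y j) → g x = g y := by
      intro x y hxy
      rw [hgdef]
      simp only
      rw [margin_congr P X1 x y (fun j hj => hxy j (by
        rintro rfl; exact (Finset.mem_compl.1 hi) hj))]
      congr 1
      apply Finset.prod_congr rfl
      intro B hB
      have hBf := Finset.mem_filter.1 hB
      apply hφdep B (hmemPass B hBf.1)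
      intro j hj
      exact hxy j (by rintro rfl; exact hBf.2 hj)
    exact key P f g hPfg hfpos hgpos A i hiA hf hg x
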